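/- Let u = (u₁, u₂) ∈ ℝ², let I ⊆ ℝ be an open interval, and let x, y, θ : I → ℝ be differentiable and v : I → ℝ be such that x'(t) = v(t)·cos(θ(t)) and y'(t) = v(t)·sin(θ(t)) for all t ∈ I, with (x(t), y(t)) ≠ u for all t ∈ I. Define e(t) = √((u₁ − x(t))² + (u₂ − y(t))²) and φ(t) = arg((u₁ − x(t)) + i·(u₂ − y(t))) − θ(t), where arg is the principal argument of a nonzero complex number. Then e is differentiable on I and e'(t) = −v(t)·cos(φ(t)) for all t ∈ I. -/

import Mathlib

open Real

/-- For a unicycle `x' = v cos θ`, `y' = v sin θ` tracking a fixed reference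
`u = (u₁, u₂)`, the distance error `e = √((u₁-x)² + (u₂-y)²)` is differentiable
with `e' = -v cos φ`, where `φ = arg((u₁-x) + i(u₂-y)) - θ` is the heading error. -/
theorem distance_error_dynamics
    (u₁ u₂ : ℝ) (α β : ℝ) (x y θ v : ℝ → ℝ)
    (hx : ∀ t ∈ Set.Ioo α β, HasDerivAt x (v t * Real.cos (θ t)) t)
    (hy : ∀ t ∈ Set.Ioo α β, HasDerivAt y (v t * Real.sin (θ t)) t)
    (hθ : ∀ t ∈ Set.Ioo α β, DifferentiableAt ℝ θ t)
    (hne : ∀ t ∈ Set.Ioo α β, (x t, y t) ≠ (u₁, u₂)) :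
    ∀ t ∈ Set.Ioo α β,
      HasDerivAt (fun s => Real.sqrt ((u₁ - x s)^2 + (u₂ - y s)^2))
        (-(v t) * Real.cos
          (Complex.arg (Complex.mk (u₁ - x t) (u₂ - y t)) - θ t)) t := by
  intro t ht
  set a := u₁ - x t with ha
  set b := u₂ - y t with hb
  have hab : a ≠ 0 ∨ b ≠ 0 := by
    by_contra h
    push_neg at h
    apply hne t ht
    have h1 : x t = u₁ := by have := h.1; simp [ha] at this; linarith
    have h2 : y t = u₂ := by have := h.2; simp [hb] at this; linarith
    simp [h1, h2]
  have hsum : a ^ 2 + b ^ 2 > 0 := by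
    rcases hab with h | h
    · positivity
    · positivity
  have hz : Complex.mk a b ≠ 0 := by
    intro h
    rw [Complex.ext_iff] at h
    simp at h
    rcases hab with h' | h' <;> tauto
  have hr : Real.sqrt (a ^ 2 + b ^ 2) > 0 := Real.sqrt_pos.mpr hsum
  -- derivative of the inner function
  have hf : HasDerivAt (fun s => (u₁ - x s) ^ 2 + (u₂ - y s) ^ 2)
      (2 * a * (-(v t * Real.cos (θ t))) + 2 * b * (-(v t * Real.sin (θ t)))) t := by
    have h1 : HasDerivAt (fun s => u₁ - x s) (-(v t * Real.cos (θ t))) t :=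
      by simpa only [zero_sub] using (hx t ht).const_sub u₁
    have h2 : HasDerivAt (fun s => u₂ - y s) (-(v t * Real.sin (θ t))) t :=
      by simpa only [zero_sub] using (hy t ht).const_sub u₂
    have := ((h1.fun_pow 2).fun_add (h2.fun_pow 2))
    refine this.congr_deriv ?_
    ring
  have hsqrt := hf.sqrt (ne_of_gt hsum)
  convert hsqrt using 1
  have habs : ‖Complex.mk a b‖ = Real.sqrt (a ^ 2 + b ^ 2) := by
    rw [Complex.norm_def, Complex.normSq_mk]
    ring_nf
  have hcos : Real.cos (Complex.arg (Complex.mk a b)) = a / Real.sqrt (a ^ 2 + b ^ 2) := by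
    rw [Complex.cos_arg hz, habs]
  have hsin : Real.sin (Complex.arg (Complex.mk a b)) = b / Real.sqrt (a ^ 2 + b ^ 2) := by
    rw [Complex.sin_arg, habs]
  rw [Real.cos_sub, hcos, hsin]
  rw [← ha, ← hb]
  field_simp
  ring
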